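/- Let a ≥ 1 and b ≥ 2a be integers, r := b − 2a + 1, R a positive integer, Ω := {0,1,…,r−1,*}, and let D_{a,b} be as defined with internal vertex set I = [a]×[b]. Let 𝒟 be the directed graph with vertex set {s,t} ∪ {v^α_x : α ∈ I, x ∈ Ω^R} and the following arcs: for every arc of D_{a,b} between s and an internal vertex α and every x ∈ Ω^R, an arc with the same direction between s and v^α_x, and similarly for arcs between t and internal vertices; for every arc (α,β) of D_{a,b} with α=(α₁,α₂), β=(β₁,β₂) both internal: if α₂ < β₂, an arc from v^α_x to v^β_y if and only if for every 1 ≤ j ≤ R one has y_j = (x_j + 1) mod r or y_j = * or x_j = *; if α₂ > β₂, an arc from v^α_x to v^β_y if and only if for every 1 ≤ j ≤ R one has y_j = (x_j − 1) mod r or y_j = * or x_j = *. Then for every q ∈ [R], after deleting the vertex set V_q := {v^α_x : α ∈ I, x_q = * or x_q = 0}, no vertex of 𝒟 has directed paths to both s and t. -/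

import Mathlib

/-- Vertices of the graph `D_{a,b}`: the terminals `s`, `t`, and internal vertices
`inner i j` (intended range `1 ≤ i ≤ a`, `1 ≤ j ≤ b`). -/
inductive DV : Type
  | s : DV
  | t : DV
  | inner : ℕ → ℕ → DV
  deriving DecidableEq

/-- The vertex `(i, j)` of `D_{a,b}`, with the convention `(i,0) = s`, `(i,b+1) = t`. -/
def node (b i j : ℕ) : DV :=
  if j = 0 then DV.s else if j = b + 1 then DV.t else DV.inner i j

/-- The arcs of the graph `D_{a,b}`. -/
def arc (a b : ℕ) : DV → DV → Prop := fun u v =>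
  (∃ i, 1 ≤ i ∧ i ≤ a ∧
    ((u = DV.s ∧ v = DV.inner i 1) ∨ (u = DV.inner i 1 ∧ v = DV.s) ∨
     (u = DV.inner i b ∧ v = DV.t) ∨ (u = DV.t ∧ v = DV.inner i b))) ∨
  (∃ i j, 1 ≤ i ∧ i ≤ a ∧ 1 ≤ j ∧ j < b ∧
    ((u = DV.inner i j ∧ v = DV.inner i (j + 1)) ∨
     (u = DV.inner i (j + 1) ∧ v = DV.inner i j))) ∨
  (∃ i j, 1 ≤ i ∧ i < a ∧ 2 ≤ j ∧ j ≤ b - 1 ∧ u = DV.inner i j ∧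
    (v = node b (i + 1) (j - 2) ∨ v = node b (i + 1) (j + 2)))

/-- `v = u + 1 (mod r)`, or one of the two coordinates is `* = none`. -/
def nextOkr {r : ℕ} (u v : Option (Fin (r + 1))) : Prop :=
  u = none ∨ v = none ∨ ∃ k, u = some k ∧ v = some (k + 1)

/-- `v = u - 1 (mod r)`, or one of the two coordinates is `* = none`. -/
def prevOkr {r : ℕ} (u v : Option (Fin (r + 1))) : Prop :=
  u = none ∨ v = none ∨ ∃ k, u = some k ∧ v = some (k - 1)

/-- The vertices of the dictatorship test graph `𝒟^st_{a,b,R,ε}`: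
`Sum.inl (i, j, x)` is `v^{(i,j)}_x`, `Sum.inr false = s`, `Sum.inr true = t`.
Here `Ω = {0, …, r-1, *}` is encoded as `Option (Fin (b - 2a + 1))`. -/
abbrev W15 (a b R : ℕ) : Type :=
  (ℕ × ℕ × (Fin R → Option (Fin (b - 2 * a + 1)))) ⊕ Bool

/-- The arcs of the dictatorship test graph `𝒟^st_{a,b,R,ε}`. -/
def liftArc (a b R : ℕ) : W15 a b R → W15 a b R → Prop := fun u v =>
  match u, v with
  | Sum.inl (i, j, x), Sum.inl (i', j', y) =>
      arc a b (DV.inner i j) (DV.inner i' j') ∧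
      ((j < j' ∧ ∀ l, nextOkr (x l) (y l)) ∨ (j' < j ∧ ∀ l, prevOkr (x l) (y l)))
  | Sum.inr false, Sum.inl (i, j, _) => arc a b DV.s (DV.inner i j)
  | Sum.inl (i, j, _), Sum.inr false => arc a b (DV.inner i j) DV.s
  | Sum.inr true, Sum.inl (i, j, _) => arc a b DV.t (DV.inner i j)
  | Sum.inl (i, j, _), Sum.inr true => arc a b (DV.inner i j) DV.t
  | Sum.inr _, Sum.inr _ => False

/- ===== auxiliary lemmas ===== -/

lemma arc_s_inner {a b i j : ℕ} (h : arc a b DV.s (DV.inner i j)) :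
    j = 1 ∧ 1 ≤ i ∧ i ≤ a := by
  rcases h with ⟨i₀, h1, h2, hc⟩ | ⟨i₀, j₀, _, _, _, _, hc⟩ | ⟨i₀, j₀, _, _, _, _, hu, _⟩
  · simp only [DV.inner.injEq] at hc
    rcases hc with ⟨-, hi, hj⟩ | ⟨hc, -⟩ | ⟨hc, -⟩ | ⟨hc, -⟩ <;> simp_all
  · rcases hc with ⟨hc, -⟩ | ⟨hc, -⟩ <;> simp_all
  · simp_all

lemma arc_t_inner {a b i j : ℕ} (h : arc a b DV.t (DV.inner i j)) :
    j = b ∧ 1 ≤ i ∧ i ≤ a := by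
  rcases h with ⟨i₀, h1, h2, hc⟩ | ⟨i₀, j₀, _, _, _, _, hc⟩ | ⟨i₀, j₀, _, _, _, _, hu, _⟩
  · rcases hc with ⟨hc, -⟩ | ⟨hc, -⟩ | ⟨hc, -⟩ | ⟨-, hc⟩ <;> simp_all
  · rcases hc with ⟨hc, -⟩ | ⟨hc, -⟩ <;> simp_all
  · simp_all

lemma arc_inner_s {a b i j : ℕ} (h : arc a b (DV.inner i j) DV.s) :
    (j = 1 ∧ 1 ≤ i ∧ i ≤ a) ∨ (j = 2 ∧ 1 ≤ i ∧ i < a) := by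
  rcases h with ⟨i₀, h1, h2, hc⟩ | ⟨i₀, j₀, _, _, _, _, hc⟩ | ⟨i₀, j₀, h1, h2, h3, h4, hu, hv⟩
  · rcases hc with ⟨hc, -⟩ | ⟨hc, -⟩ | ⟨-, hc⟩ | ⟨hc, -⟩ <;> simp_all
  · rcases hc with ⟨-, hc⟩ | ⟨-, hc⟩ <;> simp_all
  · simp only [DV.inner.injEq] at hu
    obtain ⟨rfl, rfl⟩ := hu
    rcases hv with hv | hv <;> unfold node at hv <;> split_ifs at hv with e1 e2 <;> simp_all
    omega

lemma arc_inner_t {a b i j : ℕ} (h : arc a b (DV.inner i j) DV.t) :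
    (j = b ∧ 1 ≤ i ∧ i ≤ a) ∨ (j + 2 = b + 1 ∧ 1 ≤ i ∧ i < a) := by
  rcases h with ⟨i₀, h1, h2, hc⟩ | ⟨i₀, j₀, _, _, _, _, hc⟩ | ⟨i₀, j₀, h1, h2, h3, h4, hu, hv⟩
  · rcases hc with ⟨hc, -⟩ | ⟨-, hc⟩ | ⟨hc, hc'⟩ | ⟨hc, -⟩ <;> simp_all
  · rcases hc with ⟨-, hc⟩ | ⟨-, hc⟩ <;> simp_all
  · simp only [DV.inner.injEq] at hu
    obtain ⟨rfl, rfl⟩ := hu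
    rcases hv with hv | hv <;> unfold node at hv <;> split_ifs at hv with e1 e2 <;> simp_all
    omega

lemma arc_inner_inner {a b i j i' j' : ℕ} (h : arc a b (DV.inner i j) (DV.inner i' j')) :
    (1 ≤ i ∧ i ≤ a ∧ i' = i ∧ ((1 ≤ j ∧ j' = j + 1) ∨ (1 ≤ j' ∧ j = j' + 1))) ∨
    (1 ≤ i ∧ i < a ∧ 2 ≤ j ∧ i' = i + 1 ∧ ((3 ≤ j ∧ j' = j - 2) ∨ j' = j + 2)) := by
  rcases h with ⟨i₀, h1, h2, hc⟩ | ⟨i₀, j₀, h1, h2, h3, h4, hc⟩ | ⟨i₀, j₀, h1, h2, h3, h4, hu, hv⟩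
  · rcases hc with ⟨hc, -⟩ | ⟨-, hc⟩ | ⟨-, hc⟩ | ⟨hc, -⟩ <;> simp_all
  · rcases hc with ⟨hc, hc'⟩ | ⟨hc, hc'⟩ <;> simp_all <;> omega
  · simp only [DV.inner.injEq] at hu
    obtain ⟨rfl, rfl⟩ := hu
    rcases hv with hv | hv <;> unfold node at hv <;> split_ifs at hv with e1 e2 <;>
      simp_all <;> omega

lemma fin_next_val {n : ℕ} {k k' : Fin (n + 1)} (h : k' = k + 1) (h' : (k' : ℕ) ≠ 0) :
    (k' : ℕ) = (k : ℕ) + 1 := by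
  subst h
  by_cases hl : k = Fin.last n
  · simp [Fin.val_add_one, hl] at h'
  · simp [Fin.val_add_one, hl]

lemma fin_prev_val {n : ℕ} {k k' : Fin (n + 1)} (h : k' = k - 1) (hk : (k : ℕ) ≠ 0) :
    (k : ℕ) = (k' : ℕ) + 1 := by
  have h2 : k' + 1 = k := by rw [h]; exact sub_add_cancel k 1
  by_cases hl : k' = Fin.last n
  · exact absurd (by rw [← h2, Fin.val_add_one, if_pos hl]) hk
  · rw [← h2, Fin.val_add_one, if_neg hl]

lemma next_q {n : ℕ} {x y : Option (Fin (n + 1))} {k k' : Fin (n + 1)}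
    (h : nextOkr x y) (hx : x = some k) (hy : y = some k') (hk' : (k' : ℕ) ≠ 0) :
    (k' : ℕ) = (k : ℕ) + 1 := by
  subst hx; subst hy
  rcases h with h | h | ⟨m, hm1, hm2⟩
  · simp at h
  · simp at h
  · obtain rfl := Option.some.inj hm1
    exact fin_next_val (Option.some.inj hm2) hk'

lemma prev_q {n : ℕ} {x y : Option (Fin (n + 1))} {k k' : Fin (n + 1)}
    (h : prevOkr x y) (hx : x = some k) (hy : y = some k') (hk : (k : ℕ) ≠ 0) :
    (k : ℕ) = (k' : ℕ) + 1 := by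
  subst hx; subst hy
  rcases h with h | h | ⟨m, hm1, hm2⟩
  · simp at h
  · simp at h
  · obtain rfl := Option.some.inj hm1
    exact fin_prev_val (Option.some.inj hm2) hk

def Surv (a b R : ℕ) (q : Fin R) (w : W15 a b R) : Prop :=
  match w with
  | Sum.inl (_, _, x) => ∃ k : Fin (b - 2 * a + 1), x q = some k ∧ (k : ℕ) ≠ 0
  | Sum.inr _ => True

lemma surv_of_not_mem {a b R : ℕ} {q : Fin R} {w : W15 a b R}
    (h : w ∉ {w : W15 a b R | ∃ i j x, w = Sum.inl (i, j, x) ∧ (x q = none ∨ x q = some 0)}) :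
    Surv a b R q w := by
  obtain ⟨i, j, x⟩ | bu := w
  · match hx : x q with
    | none => exact absurd ⟨i, j, x, rfl, Or.inl hx⟩ h
    | some k =>
      refine ⟨k, hx, fun h0 => h ⟨i, j, x, rfl, Or.inr ?_⟩⟩
      rw [hx]
      exact congrArg some (Fin.ext h0)
  · trivial

def GS (a b : ℕ) {R : ℕ} (q : Fin R) (w : W15 a b R) : Prop :=
  match w with
  | Sum.inl (i, j, x) =>
      ∃ k : Fin (b - 2 * a + 1), x q = some k ∧ (k : ℕ) ≠ 0 ∧ 1 ≤ i ∧ j + i ≤ a + (k : ℕ)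
  | Sum.inr false => True
  | Sum.inr true => False

def GT (a b : ℕ) {R : ℕ} (q : Fin R) (w : W15 a b R) : Prop :=
  match w with
  | Sum.inl (i, j, x) =>
      ∃ k : Fin (b - 2 * a + 1), x q = some k ∧ (k : ℕ) ≠ 0 ∧ 1 ≤ i ∧ a + i + (k : ℕ) ≤ j
  | Sum.inr false => False
  | Sum.inr true => True

lemma stepGS {a b R : ℕ} (ha : 1 ≤ a) (hb : 2 * a ≤ b) (q : Fin R) {u v : W15 a b R}
    (huv : liftArc a b R u v) (hu : Surv a b R q u) (h : GS a b q v) : GS a b q u := by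
  obtain ⟨i, j, x⟩ | bu := u
  · obtain ⟨k, hx, hk⟩ := hu
    obtain ⟨i', j', y⟩ | bv := v
    · obtain ⟨harc, hdir⟩ := huv
      obtain ⟨k', hy, hk', hi', hineq⟩ := h
      rcases arc_inner_inner harc with
        ⟨h1, h2, rfl, ⟨hj1, rfl⟩ | ⟨hj1, rfl⟩⟩ | ⟨h1, h2, h3, rfl, ⟨hj3, rfl⟩ | rfl⟩
      · rcases hdir with ⟨-, hnext⟩ | ⟨hlt, -⟩
        · have hkk := next_q (hnext q) hx hy hk'
          exact ⟨k, hx, hk, h1, by omega⟩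
        · omega
      · rcases hdir with ⟨hlt, -⟩ | ⟨-, hprev⟩
        · omega
        · have hkk := prev_q (hprev q) hx hy hk
          exact ⟨k, hx, hk, h1, by omega⟩
      · rcases hdir with ⟨hlt, -⟩ | ⟨-, hprev⟩
        · omega
        · have hkk := prev_q (hprev q) hx hy hk
          exact ⟨k, hx, hk, h1, by omega⟩
      · rcases hdir with ⟨-, hnext⟩ | ⟨hlt, -⟩
        · have hkk := next_q (hnext q) hx hy hk'
          exact ⟨k, hx, hk, h1, by omega⟩
        · omega
    · cases bv
      · rcases arc_inner_s huv with ⟨rfl, h1, h2⟩ | ⟨rfl, h1, h2⟩ <;>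
          exact ⟨k, hx, hk, h1, by omega⟩
      · exact h.elim
  · cases bu
    · trivial
    · obtain ⟨i, j, y⟩ | bv := v
      · obtain ⟨rfl, hi1, hi2⟩ := arc_t_inner huv
        obtain ⟨k, hy, hk, hi, hineq⟩ := h
        have := k.isLt
        exact absurd hineq (by omega)
      · exact huv.elim

lemma stepGT {a b R : ℕ} (ha : 1 ≤ a) (hb : 2 * a ≤ b) (q : Fin R) {u v : W15 a b R}
    (huv : liftArc a b R u v) (hu : Surv a b R q u) (h : GT a b q v) : GT a b q u := by
  obtain ⟨i, j, x⟩ | bu := u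
  · obtain ⟨k, hx, hk⟩ := hu
    obtain ⟨i', j', y⟩ | bv := v
    · obtain ⟨harc, hdir⟩ := huv
      obtain ⟨k', hy, hk', hi', hineq⟩ := h
      rcases arc_inner_inner harc with
        ⟨h1, h2, rfl, ⟨hj1, rfl⟩ | ⟨hj1, rfl⟩⟩ | ⟨h1, h2, h3, rfl, ⟨hj3, rfl⟩ | rfl⟩
      · rcases hdir with ⟨-, hnext⟩ | ⟨hlt, -⟩
        · have hkk := next_q (hnext q) hx hy hk'
          exact ⟨k, hx, hk, h1, by omega⟩
        · omega
      · rcases hdir with ⟨hlt, -⟩ | ⟨-, hprev⟩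
        · omega
        · have hkk := prev_q (hprev q) hx hy hk
          exact ⟨k, hx, hk, h1, by omega⟩
      · rcases hdir with ⟨hlt, -⟩ | ⟨-, hprev⟩
        · omega
        · have hkk := prev_q (hprev q) hx hy hk
          exact ⟨k, hx, hk, h1, by omega⟩
      · rcases hdir with ⟨-, hnext⟩ | ⟨hlt, -⟩
        · have hkk := next_q (hnext q) hx hy hk'
          exact ⟨k, hx, hk, h1, by omega⟩
        · omega
    · cases bv
      · exact h.elim
      · have := k.isLt
        rcases arc_inner_t huv with ⟨rfl, h1, h2⟩ | ⟨hj, h1, h2⟩ <;>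
          exact ⟨k, hx, hk, h1, by omega⟩
  · cases bu
    · obtain ⟨i, j, y⟩ | bv := v
      · obtain ⟨rfl, hi1, hi2⟩ := arc_s_inner huv
        obtain ⟨k, hy, hk, hi, hineq⟩ := h
        exact absurd hineq (by omega)
      · exact huv.elim
    · trivial

lemma reach_GS {a b R : ℕ} (ha : 1 ≤ a) (hb : 2 * a ≤ b) (q : Fin R) {w : W15 a b R}
    (h : Relation.ReflTransGen
        (fun x y => liftArc a b R x y ∧
          x ∉ {w : W15 a b R | ∃ i j x, w = Sum.inl (i, j, x) ∧ (x q = none ∨ x q = some 0)} ∧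
          y ∉ {w : W15 a b R | ∃ i j x, w = Sum.inl (i, j, x) ∧ (x q = none ∨ x q = some 0)})
        w (Sum.inr false)) : GS a b q w := by
  induction h using Relation.ReflTransGen.head_induction_on with
  | refl => trivial
  | head h' _ ih => exact stepGS ha hb q h'.1 (surv_of_not_mem h'.2.1) ih

lemma reach_GT {a b R : ℕ} (ha : 1 ≤ a) (hb : 2 * a ≤ b) (q : Fin R) {w : W15 a b R}
    (h : Relation.ReflTransGen
        (fun x y => liftArc a b R x y ∧
          x ∉ {w : W15 a b R | ∃ i j x, w = Sum.inl (i, j, x) ∧ (x q = none ∨ x q = some 0)} ∧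
          y ∉ {w : W15 a b R | ∃ i j x, w = Sum.inl (i, j, x) ∧ (x q = none ∨ x q = some 0)})
        w (Sum.inr true)) : GT a b q w := by
  induction h using Relation.ReflTransGen.head_induction_on with
  | refl => trivial
  | head h' _ ih => exact stepGT ha hb q h'.1 (surv_of_not_mem h'.2.1) ih


/-- completeness of the dictatorship test for `{s,t}`-NodeDoubleCut:
after removing `V_q = {v^α_x : x_q = * or 0}`, no vertex has directed paths to both
`s` and `t`. -/
theorem stmt_15 (a b R : ℕ) (ha : 1 ≤ a) (hb : 2 * a ≤ b) (q : Fin R)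
    (Vq : Set (W15 a b R))
    (hVq : Vq = {w | ∃ i j x, w = Sum.inl (i, j, x) ∧ (x q = none ∨ x q = some 0)}) :
    ∀ w : W15 a b R, w ∉ Vq →
      ¬ (Relation.ReflTransGen
            (fun x y => liftArc a b R x y ∧ x ∉ Vq ∧ y ∉ Vq) w (Sum.inr false) ∧
         Relation.ReflTransGen
            (fun x y => liftArc a b R x y ∧ x ∉ Vq ∧ y ∉ Vq) w (Sum.inr true)) := by
  subst hVq
  rintro w hw ⟨h1, h2⟩
  have hgs : GS a b q w := reach_GS ha hb q h1
  have hgt : GT a b q w := reach_GT ha hb q h2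
  obtain ⟨i, j, x⟩ | bw := w
  · obtain ⟨k, hx, hk, hi, hs⟩ := hgs
    obtain ⟨k', hx', hk', hi', ht⟩ := hgt
    obtain rfl : k = k' := Option.some.inj (hx ▸ hx')
    omega
  · cases bw
    · exact hgt
    · exact hgs
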